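/- A Banach lattice X is a KB-space (i.e., every increasing norm-bounded sequence in X₊ converges in norm) if and only if X has order continuous norm (i.e., for every downward directed set D ⊆ X₊ with infimum 0 one has inf{‖x‖ : x ∈ D} = 0) and X has the strong Nakano property. -/

import Mathlib

/-- A Banach lattice has the **strong Nakano property** if every nonempty norm-bounded
upwards directed set `A ⊆ X₊` has an upper bound `b ∈ X₊` with `‖b‖ = sup {‖a‖ : a ∈ A}`. -/
def StrongNakano (X : Type*) [NormedAddCommGroup X] [Lattice X] [IsOrderedAddMonoid X] [HasSolidNorm X] : Prop :=
  ∀ A : Set X, A.Nonempty → (∀ a ∈ A, 0 ≤ a) → DirectedOn (· ≤ ·) A →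
    BddAbove (norm '' A) →
    ∃ b : X, 0 ≤ b ∧ b ∈ upperBounds A ∧ ‖b‖ = sSup (norm '' A)

/-- `X` is a **KB-space**: every increasing norm-bounded sequence in `X₊` converges in norm. -/
def IsKBSpace (X : Type*) [NormedAddCommGroup X] [Lattice X] [IsOrderedAddMonoid X] [HasSolidNorm X] : Prop :=
  ∀ x : ℕ → X, Monotone x → (∀ n, 0 ≤ x n) → (∃ M : ℝ, ∀ n, ‖x n‖ ≤ M) →
    ∃ l : X, Filter.Tendsto x Filter.atTop (nhds l)

/-- `X` has **order continuous norm**: every downward directed set `D ⊆ X₊`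
with infimum `0` satisfies `inf {‖x‖ : x ∈ D} = 0`. -/
def OrderContinuousNorm (X : Type*) [NormedAddCommGroup X] [Lattice X] [IsOrderedAddMonoid X] [HasSolidNorm X] : Prop :=
  ∀ D : Set X, D.Nonempty → (∀ d ∈ D, 0 ≤ d) → DirectedOn (· ≥ ·) D → IsGLB D 0 →
    sInf (norm '' D) = 0


section Helpers

open Filter Topology

variable {X : Type*} [NormedAddCommGroup X] [Lattice X] [IsOrderedAddMonoid X] [HasSolidNorm X]

lemma norm_mono_of_nonneg {a b : X} (h0 : 0 ≤ a) (h : a ≤ b) : ‖a‖ ≤ ‖b‖ := by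
  apply HasSolidNorm.solid
  rw [abs_of_nonneg h0, abs_of_nonneg (h0.trans h)]
  exact h

lemma kb_up_cauchy (hKB : IsKBSpace X) {A : Set X}
    (hpos : ∀ a ∈ A, 0 ≤ a) (hdir : DirectedOn (· ≤ ·) A) {a₀ : X} (ha₀ : a₀ ∈ A)
    {M : ℝ} (hM : ∀ a ∈ A, ‖a‖ ≤ M)
    {ε : ℝ} (hε : 0 < ε) :
    ∃ a ∈ A, ∀ b ∈ A, ∀ c ∈ A, a ≤ b → a ≤ c → ‖b - c‖ ≤ ε := by
  by_contra hcon
  push_neg at hcon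
  have H : ∀ a ∈ A, ∃ q, ∃ _ : q ∈ A, a ≤ q ∧ ε / 2 < ‖q - a‖ := by
    intro a ha
    obtain ⟨b, hb, c, hc, hab, hac, hbc⟩ := hcon a ha
    obtain ⟨d, hd, hbd, hcd⟩ := hdir b hb c hc
    refine ⟨d, hd, hab.trans hbd, ?_⟩
    have h1 : ‖b - c‖ ≤ ‖d - b‖ + ‖d - c‖ := by
      have := norm_sub_le (b - d) (c - d)
      rw [sub_sub_sub_cancel_right] at this
      rw [norm_sub_rev b d, norm_sub_rev c d] at this
      exact this
    have h2 : ‖d - b‖ ≤ ‖d - a‖ :=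
      norm_mono_of_nonneg (sub_nonneg.mpr hbd) (sub_le_sub_left hab d)
    have h3 : ‖d - c‖ ≤ ‖d - a‖ :=
      norm_mono_of_nonneg (sub_nonneg.mpr hcd) (sub_le_sub_left hac d)
    linarith
  choose q hq h1 h2 using H
  let F : ℕ → {x : X // x ∈ A} := fun n =>
    Nat.rec ⟨a₀, ha₀⟩ (fun _ prev => ⟨q prev.1 prev.2, hq prev.1 prev.2⟩) n
  have hmono : Monotone fun n => (F n).1 :=
    monotone_nat_of_le_succ fun n => h1 (F n).1 (F n).2
  obtain ⟨l, hl⟩ := hKB (fun n => (F n).1) hmono (fun n => hpos _ (F n).2)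
    ⟨M, fun n => hM _ (F n).2⟩
  obtain ⟨N, hN⟩ := Metric.cauchySeq_iff.mp hl.cauchySeq (ε / 2) (by linarith)
  have hd := hN (N + 1) (by omega) N (by omega)
  rw [dist_eq_norm] at hd
  exact absurd hd (not_lt.mpr (h2 (F N).1 (F N).2).le)

lemma kb_down_cauchy (hKB : IsKBSpace X) {D : Set X} {d₀ : X} (hd₀ : d₀ ∈ D)
    (hpos : ∀ d ∈ D, 0 ≤ d) (hdir : DirectedOn (· ≥ ·) D)
    {ε : ℝ} (hε : 0 < ε) :
    ∃ a ∈ D, ∀ b ∈ D, ∀ c ∈ D, b ≤ a → c ≤ a → ‖b - c‖ ≤ ε := by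
  by_contra hcon
  push_neg at hcon
  have H : ∀ a ∈ D, ∃ q, ∃ _ : q ∈ D, q ≤ a ∧ ε / 2 < ‖a - q‖ := by
    intro a ha
    obtain ⟨b, hb, c, hc, hab, hac, hbc⟩ := hcon a ha
    obtain ⟨d, hd, hbd, hcd⟩ := hdir b hb c hc
    refine ⟨d, hd, hbd.trans hab, ?_⟩
    have h1 : ‖b - c‖ ≤ ‖b - d‖ + ‖c - d‖ := by
      have := norm_sub_le (b - d) (c - d)
      rw [sub_sub_sub_cancel_right] at this
      exact this
    have h2 : ‖b - d‖ ≤ ‖a - d‖ :=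
      norm_mono_of_nonneg (sub_nonneg.mpr hbd) (sub_le_sub_right hab d)
    have h3 : ‖c - d‖ ≤ ‖a - d‖ :=
      norm_mono_of_nonneg (sub_nonneg.mpr hcd) (sub_le_sub_right hac d)
    linarith
  choose q hq h1 h2 using H
  let F : ℕ → {x : X // x ∈ D} := fun n =>
    Nat.rec ⟨d₀, hd₀⟩ (fun _ prev => ⟨q prev.1 prev.2, hq prev.1 prev.2⟩) n
  have hanti : Antitone fun n => (F n).1 :=
    antitone_nat_of_succ_le fun n => h1 (F n).1 (F n).2
  have hFd₀ : ∀ n, (F n).1 ≤ d₀ := fun n => hanti (Nat.zero_le n)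
  have hxm : Monotone fun n => d₀ - (F n).1 :=
    fun m n hmn => sub_le_sub_left (hanti hmn) d₀
  have hxp : ∀ n, 0 ≤ d₀ - (F n).1 := fun n => sub_nonneg.mpr (hFd₀ n)
  have hxb : ∀ n, ‖d₀ - (F n).1‖ ≤ ‖d₀‖ := fun n =>
    norm_mono_of_nonneg (hxp n) (sub_le_self d₀ (hpos _ (F n).2))
  obtain ⟨l, hl⟩ := hKB (fun n => d₀ - (F n).1) hxm hxp ⟨‖d₀‖, hxb⟩
  obtain ⟨N, hN⟩ := Metric.cauchySeq_iff.mp hl.cauchySeq (ε / 2) (by linarith)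
  have hd := hN (N + 1) (by omega) N (by omega)
  rw [dist_eq_norm] at hd
  have he : (d₀ - (F (N + 1)).1) - (d₀ - (F N).1) = (F N).1 - (F (N + 1)).1 := by abel
  rw [he] at hd
  exact absurd hd (not_lt.mpr (h2 (F N).1 (F N).2).le)

lemma kb_strongNakano (hKB : IsKBSpace X) {A : Set X} (hne : A.Nonempty)
    (hpos : ∀ a ∈ A, 0 ≤ a) (hdir : DirectedOn (· ≤ ·) A)
    (hbdd : BddAbove (norm '' A)) :
    ∃ b : X, 0 ≤ b ∧ b ∈ upperBounds A ∧ ‖b‖ = sSup (norm '' A) := by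
  obtain ⟨a₀, ha₀⟩ := hne
  obtain ⟨M, hM⟩ := hbdd
  have hM' : ∀ a ∈ A, ‖a‖ ≤ M := fun a ha => hM ⟨a, ha, rfl⟩
  have hcau : ∀ k : ℕ, ∃ a ∈ A, ∀ b ∈ A, ∀ c ∈ A, a ≤ b → a ≤ c →
      ‖b - c‖ ≤ 1 / (k + 1) :=
    fun k => kb_up_cauchy hKB hpos hdir ha₀ hM' (by positivity)
  choose w hw hwc using hcau
  choose ub hub1 hub2 hub3 using hdir
  let C : ℕ → {x : X // x ∈ A} := fun n =>
    Nat.rec ⟨w 0, hw 0⟩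
      (fun k prev => ⟨ub prev.1 prev.2 (w (k + 1)) (hw (k + 1)),
        hub1 prev.1 prev.2 (w (k + 1)) (hw (k + 1))⟩) n
  have hCw : ∀ k, w k ≤ (C k).1 := by
    intro k
    cases k with
    | zero => exact le_refl _
    | succ k => exact hub3 (C k).1 (C k).2 (w (k + 1)) (hw (k + 1))
  have hCmono : Monotone fun k => (C k).1 :=
    monotone_nat_of_le_succ fun k => hub2 (C k).1 (C k).2 (w (k + 1)) (hw (k + 1))
  obtain ⟨b, hb⟩ := hKB (fun k => (C k).1) hCmono (fun k => hpos _ (C k).2)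
    ⟨M, fun k => hM' _ (C k).2⟩
  have hub : b ∈ upperBounds A := by
    intro a ha
    set C' : ℕ → X := fun k => ub (C k).1 (C k).2 a ha with hC'
    have hC'A : ∀ k, C' k ∈ A := fun k => hub1 _ _ _ _
    have hC'a : ∀ k, a ≤ C' k := fun k => hub3 _ _ _ _
    have hC'C : ∀ k, (C k).1 ≤ C' k := fun k => hub2 _ _ _ _
    have hclose : ∀ k, ‖C' k - (C k).1‖ ≤ 1 / (k + 1) := by
      intro k
      exact hwc k _ (hC'A k) _ (C k).2 ((hCw k).trans (hC'C k)) (hCw k)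
    have hC'tend : Tendsto C' atTop (nhds b) := by
      have h0 : Tendsto (fun k => C' k - (C k).1) atTop (nhds 0) :=
        squeeze_zero_norm hclose tendsto_one_div_add_atTop_nhds_zero_nat
      have := h0.add hb
      simpa using this
    exact ge_of_tendsto hC'tend (Eventually.of_forall hC'a)
  have hb0 : 0 ≤ b := ge_of_tendsto hb (Eventually.of_forall fun k => hpos _ (C k).2)
  have hnorm : Tendsto (fun k => ‖(C k).1‖) atTop (nhds ‖b‖) := hb.norm
  refine ⟨b, hb0, hub, le_antisymm ?_ ?_⟩
  · exact le_of_tendsto hnorm (Eventually.of_forall fun k =>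
      le_csSup ⟨M, hM⟩ ⟨_, (C k).2, rfl⟩)
  · exact csSup_le ⟨‖a₀‖, a₀, ha₀, rfl⟩ (by
      rintro y ⟨a, ha, rfl⟩
      exact norm_mono_of_nonneg (hpos a ha) (hub ha))

lemma kb_ocn (hKB : IsKBSpace X) {D : Set X} (hne : D.Nonempty)
    (hpos : ∀ d ∈ D, 0 ≤ d) (hdir : DirectedOn (· ≥ ·) D) (hglb : IsGLB D 0) :
    sInf (norm '' D) = 0 := by
  obtain ⟨d₀, hd₀⟩ := hne
  have hcau : ∀ k : ℕ, ∃ a ∈ D, ∀ b ∈ D, ∀ c ∈ D, b ≤ a → c ≤ a →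
      ‖b - c‖ ≤ 1 / (k + 1) :=
    fun k => kb_down_cauchy hKB hd₀ hpos hdir (by positivity)
  choose w hw hwc using hcau
  choose lb hlb1 hlb2 hlb3 using hdir
  let E : ℕ → {x : X // x ∈ D} := fun n =>
    Nat.rec ⟨lb d₀ hd₀ (w 0) (hw 0), hlb1 d₀ hd₀ (w 0) (hw 0)⟩
      (fun k prev => ⟨lb prev.1 prev.2 (w (k + 1)) (hw (k + 1)),
        hlb1 prev.1 prev.2 (w (k + 1)) (hw (k + 1))⟩) n
  have hEw : ∀ k, (E k).1 ≤ w k := by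
    intro k
    cases k with
    | zero => exact hlb3 d₀ hd₀ (w 0) (hw 0)
    | succ k => exact hlb3 (E k).1 (E k).2 (w (k + 1)) (hw (k + 1))
  have hEanti : Antitone fun k => (E k).1 :=
    antitone_nat_of_succ_le fun k => hlb2 (E k).1 (E k).2 (w (k + 1)) (hw (k + 1))
  have hEd₀ : ∀ k, (E k).1 ≤ d₀ := fun k =>
    (hEanti (Nat.zero_le k)).trans (hlb2 d₀ hd₀ (w 0) (hw 0))
  have hxm : Monotone fun k => d₀ - (E k).1 := fun m n h => sub_le_sub_left (hEanti h) d₀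
  have hxp : ∀ k, 0 ≤ d₀ - (E k).1 := fun k => sub_nonneg.mpr (hEd₀ k)
  have hxb : ∀ k, ‖d₀ - (E k).1‖ ≤ ‖d₀‖ := fun k =>
    norm_mono_of_nonneg (hxp k) (sub_le_self d₀ (hpos _ (E k).2))
  obtain ⟨m, hm⟩ := hKB (fun k => d₀ - (E k).1) hxm hxp ⟨‖d₀‖, hxb⟩
  have hEtend : Tendsto (fun k => (E k).1) atTop (nhds (d₀ - m)) := by
    have := (tendsto_const_nhds (x := d₀) (f := atTop (α := ℕ))).sub hm
    simpa using this
  have hl0 : 0 ≤ d₀ - m :=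
    ge_of_tendsto hEtend (Eventually.of_forall fun k => hpos _ (E k).2)
  have hlbD : d₀ - m ∈ lowerBounds D := by
    intro d hd
    set E' : ℕ → X := fun k => lb (E k).1 (E k).2 d hd with hE'
    have hE'D : ∀ k, E' k ∈ D := fun k => hlb1 _ _ _ _
    have hE'd : ∀ k, E' k ≤ d := fun k => hlb3 _ _ _ _
    have hE'E : ∀ k, E' k ≤ (E k).1 := fun k => hlb2 _ _ _ _
    have hclose : ∀ k, ‖E' k - (E k).1‖ ≤ 1 / (k + 1) := fun k =>
      hwc k _ (hE'D k) _ (E k).2 ((hE'E k).trans (hEw k)) (hEw k)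
    have hE'tend : Tendsto E' atTop (nhds (d₀ - m)) := by
      have h0 : Tendsto (fun k => E' k - (E k).1) atTop (nhds 0) :=
        squeeze_zero_norm hclose tendsto_one_div_add_atTop_nhds_zero_nat
      have := h0.add hEtend
      simpa using this
    exact le_of_tendsto hE'tend (Eventually.of_forall hE'd)
  have hl_eq : d₀ - m = 0 := le_antisymm (hglb.2 hlbD) hl0
  have hnorm : Tendsto (fun k => ‖(E k).1‖) atTop (nhds 0) := by
    have := hEtend.norm
    rw [hl_eq, norm_zero] at this
    exact this
  have hbb : BddBelow (norm '' D) :=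
    ⟨0, by rintro y ⟨d, hd, rfl⟩; exact norm_nonneg d⟩
  refine le_antisymm ?_ ?_
  · exact ge_of_tendsto hnorm (Eventually.of_forall fun k =>
      csInf_le hbb ⟨_, (E k).2, rfl⟩)
  · exact le_csInf ⟨‖d₀‖, d₀, hd₀, rfl⟩ (by rintro y ⟨d, hd, rfl⟩; exact norm_nonneg d)

lemma ocn_nakano_kb [NormedSpace ℝ X] [CompleteSpace X]
    (hOCN : ∀ D : Set X, D.Nonempty → (∀ d ∈ D, 0 ≤ d) → DirectedOn (· ≥ ·) D →
      IsGLB D 0 → sInf (norm '' D) = 0)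
    (hSN : ∀ A : Set X, A.Nonempty → (∀ a ∈ A, 0 ≤ a) → DirectedOn (· ≤ ·) A →
      BddAbove (norm '' A) →
      ∃ b : X, 0 ≤ b ∧ b ∈ upperBounds A ∧ ‖b‖ = sSup (norm '' A)) :
    IsKBSpace X := by
  intro x hmono hpos hbdd
  obtain ⟨M, hM⟩ := hbdd
  have hdirA : DirectedOn (· ≤ ·) (Set.range x) := by
    rintro _ ⟨n, rfl⟩ _ ⟨m, rfl⟩
    exact ⟨x (max n m), ⟨max n m, rfl⟩, hmono (le_max_left n m), hmono (le_max_right n m)⟩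
  obtain ⟨b, hb0, hbub, -⟩ := hSN (Set.range x) ⟨x 0, 0, rfl⟩
    (by rintro _ ⟨n, rfl⟩; exact hpos n) hdirA
    ⟨M, by rintro _ ⟨_, ⟨n, rfl⟩, rfl⟩; exact hM n⟩
  set D : Set X := {y | ∃ u ∈ upperBounds (Set.range x), ∃ n : ℕ, y = u - x n} with hD
  have hDne : D.Nonempty := ⟨b - x 0, b, hbub, 0, rfl⟩
  have hDpos : ∀ d ∈ D, 0 ≤ d := by
    rintro _ ⟨u, hu, n, rfl⟩
    exact sub_nonneg.mpr (hu ⟨n, rfl⟩)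
  have hDdir : DirectedOn (· ≥ ·) D := by
    rintro _ ⟨u, hu, n, rfl⟩ _ ⟨v, hv, m, rfl⟩
    have huv : u ⊓ v ∈ upperBounds (Set.range x) := by
      rintro _ ⟨k, rfl⟩
      exact le_inf (hu ⟨k, rfl⟩) (hv ⟨k, rfl⟩)
    refine ⟨u ⊓ v - x (max n m), ⟨u ⊓ v, huv, max n m, rfl⟩, ?_, ?_⟩
    · exact sub_le_sub inf_le_left (hmono (le_max_left n m))
    · exact sub_le_sub inf_le_right (hmono (le_max_right n m))
  have hDglb : IsGLB D 0 := by
    constructor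
    · rintro _ ⟨u, hu, n, rfl⟩
      exact sub_nonneg.mpr (hu ⟨n, rfl⟩)
    · intro c hc
      -- show c ≤ 0 via c⁺ = 0
      have key : ∀ u ∈ upperBounds (Set.range x), u - c⁺ ∈ upperBounds (Set.range x) := by
        intro u hu
        rintro _ ⟨n, rfl⟩
        have h1 : c ≤ u - x n := hc ⟨u, hu, n, rfl⟩
        have h2 : x n ≤ u - c := le_sub_comm.mp h1
        have h3 : x n ≤ u := hu ⟨n, rfl⟩
        have h4 : x n ≤ (u - c) ⊓ (u - 0) := le_inf h2 (by simpa using h3)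
        rwa [← sub_sup, ← posPart_def] at h4
      have hk : ∀ k : ℕ, b - k • c⁺ ∈ upperBounds (Set.range x) := by
        intro k
        induction k with
        | zero => simpa using hbub
        | succ k ih =>
          have := key _ ih
          have he : b - k • c⁺ - c⁺ = b - (k + 1) • c⁺ := by
            rw [succ_nsmul]; abel
          rwa [he] at this
      have hnorm : ∀ k : ℕ, (k : ℝ) * ‖c⁺‖ ≤ ‖b - x 0‖ := by
        intro k
        have h1 : x 0 ≤ b - k • c⁺ := hk k ⟨0, rfl⟩
        have h2 : k • c⁺ ≤ b - x 0 := le_sub_comm.mp h1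
        have h3 : (0 : X) ≤ k • c⁺ := nsmul_nonneg (posPart_nonneg c) k
        have h4 := norm_mono_of_nonneg h3 h2
        rwa [← Nat.cast_smul_eq_nsmul ℝ, norm_smul, Real.norm_natCast] at h4
      have hc0 : ‖c⁺‖ = 0 := by
        by_contra hne0
        have hpos' : 0 < ‖c⁺‖ := lt_of_le_of_ne (norm_nonneg _) (Ne.symm hne0)
        obtain ⟨k, hk'⟩ := exists_nat_gt (‖b - x 0‖ / ‖c⁺‖)
        have := hnorm k
        rw [div_lt_iff₀ hpos'] at hk'
        linarith
      have : c⁺ = 0 := norm_eq_zero.mp hc0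
      exact posPart_eq_zero.mp this
  have hinf := hOCN D hDne hDpos hDdir hDglb
  have hcauchy : CauchySeq x := by
    rw [Metric.cauchySeq_iff']
    intro ε hε
    have hne' : (norm '' D).Nonempty := hDne.image _
    obtain ⟨_, ⟨_, ⟨u, hu, n, rfl⟩, rfl⟩, hlt⟩ :=
      exists_lt_of_csInf_lt hne' (by rw [hinf]; exact hε)
    refine ⟨n, fun m hm => ?_⟩
    rw [dist_eq_norm]
    calc ‖x m - x n‖ ≤ ‖u - x n‖ :=
          norm_mono_of_nonneg (sub_nonneg.mpr (hmono hm))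
            (sub_le_sub_right (hu ⟨m, rfl⟩) (x n))
      _ < ε := hlt
  exact cauchySeq_tendsto_of_complete hcauchy

end Helpers

/-- **Proposition.** A Banach lattice is a KB-space iff it has order continuous norm
and the strong Nakano property. -/
theorem isKBSpace_iff_orderContinuous_and_strongNakano
    (X : Type*) [NormedAddCommGroup X] [Lattice X] [IsOrderedAddMonoid X] [HasSolidNorm X] [NormedSpace ℝ X] [CompleteSpace X] :
    IsKBSpace X ↔ OrderContinuousNorm X ∧ StrongNakano X := by
  constructor
  · intro hKB
    exact ⟨fun D hne hpos hdir hglb => kb_ocn hKB hne hpos hdir hglb,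
      fun A hne hpos hdir hbdd => kb_strongNakano hKB hne hpos hdir hbdd⟩
  · rintro ⟨hOCN, hSN⟩
    exact ocn_nakano_kb hOCN hSN
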